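/- Let p be a polynomial of degree n over ℂ with p(0) = 1 that has no zeros in the closed unit disk. Then there exists an n × n complex matrix K with operator norm strictly less than 1 such that p(z) = det(I - z•K) for all z ∈ ℂ. -/

import Mathlib

open scoped Matrix.Norms.L2Operator

lemma diag_l2_norm_le (n : ℕ) (v : Fin n → ℂ) (c : ℝ) (hc : 0 ≤ c)
    (h : ∀ i, ‖v i‖ ≤ c) : ‖Matrix.diagonal v‖ ≤ c := by
  rw [Matrix.l2_opNorm_def]
  refine ContinuousLinearMap.opNorm_le_bound _ hc fun x => ?_
  simp only [LinearEquiv.trans_apply, LinearMap.coe_toContinuousLinearMap',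
    Matrix.toEuclideanLin_apply]
  rw [EuclideanSpace.norm_eq, EuclideanSpace.norm_eq]
  rw [← Real.sqrt_sq hc, ← Real.sqrt_mul (by positivity)]
  apply Real.sqrt_le_sqrt
  rw [Finset.mul_sum]
  apply Finset.sum_le_sum
  intro i _
  have : (WithLp.equiv 2 (Fin n → ℂ)).symm (Matrix.mulVec (Matrix.diagonal v) ((WithLp.equiv 2 (Fin n → ℂ)) x)) i
      = v i * (WithLp.equiv 2 (Fin n → ℂ)) x i := by
    simp [Matrix.mulVec_diagonal]
  erw [this]; rw [norm_mul, mul_pow]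
  have h1 : ‖(WithLp.equiv 2 (Fin n → ℂ)) x i‖ = ‖x i‖ := rfl
  rw [h1]
  have h2 : (0:ℝ) ≤ ‖x i‖ ^ 2 := by positivity
  exact mul_le_mul_of_nonneg_right (pow_le_pow_left₀ (norm_nonneg _) (h i) 2) h2

theorem stmt_0 (n : ℕ) (p : Polynomial ℂ) (hdeg : p.natDegree = n)
    (h0 : p.eval 0 = 1) (hstable : ∀ z : ℂ, ‖z‖ ≤ 1 → p.eval z ≠ 0) :
    ∃ K : Matrix (Fin n) (Fin n) ℂ, ‖K‖ < 1 ∧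
      ∀ z : ℂ, p.eval z = (1 - z • K).det := by
  classical
  have hp0 : p ≠ 0 := by intro h; rw [h] at h0; simp at h0
  have hsplit : p.Splits := IsAlgClosed.splits p
  have hcard : p.roots.card = n := by
    rw [← hdeg]; exact (Polynomial.splits_iff_card_roots.mp hsplit)
  set l := p.roots.toList with hl
  have hlen : l.length = n := by rw [hl, Multiset.length_toList, hcard]
  have hroot : ∀ r ∈ l, 1 < ‖r‖ := by
    intro r hr
    have hr' : r ∈ p.roots := by rwa [← Multiset.mem_toList]
    have := Polynomial.isRoot_of_mem_roots hr'
    by_contra hc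
    exact hstable r (le_of_not_gt hc) this
  -- roots as a Fin n indexed family
  set r : Fin n → ℂ := fun i => l.get (Fin.cast hlen.symm i) with hrdef
  have hrmem : ∀ i, 1 < ‖r i‖ := fun i => hroot _ (List.get_mem _ _)
  have hrne : ∀ i, r i ≠ 0 := fun i => by
    intro h; have := hrmem i; rw [h] at this; norm_num at this
  set v : Fin n → ℂ := fun i => (r i)⁻¹ with hvdef
  have hv : ∀ i, ‖v i‖ < 1 := fun i => by
    rw [hvdef]; simp only [norm_inv]
    rw [inv_lt_one_iff₀]; right; exact hrmem i
  refine ⟨Matrix.diagonal v, ?_, ?_⟩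
  · -- norm bound
    set c : NNReal := Finset.univ.sup (fun i => ‖v i‖₊) with hcdef
    have hc1 : c < 1 := by
      rw [hcdef]
      apply Finset.sup_lt_iff (by norm_num : (0:NNReal) < 1) |>.mpr
      intro i _
      exact_mod_cast hv i
    have hle : ‖Matrix.diagonal v‖ ≤ (c : ℝ) :=
      diag_l2_norm_le n v c c.coe_nonneg fun i => by
        exact_mod_cast Finset.le_sup (f := fun i => ‖v i‖₊) (Finset.mem_univ i)
    exact lt_of_le_of_lt hle (by exact_mod_cast hc1)
  · intro z
    -- determinant computation
    have hdiag : (1 - z • Matrix.diagonal v) = Matrix.diagonal (fun i => 1 - z * v i) := by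
      rw [← Matrix.diagonal_one, ← Matrix.diagonal_smul, ← Matrix.diagonal_sub]
      rfl
    rw [hdiag, Matrix.det_diagonal]
    -- factor p
    have hp : p = Polynomial.C p.leadingCoeff *
        (p.roots.map fun a => Polynomial.X - Polynomial.C a).prod :=
      hsplit.eq_prod_roots
    have hkey : ∀ w : ℂ, p.eval w = p.leadingCoeff * ∏ i, (w - r i) := by
      intro w
      conv_lhs => rw [hp]
      rw [Polynomial.eval_mul, Polynomial.eval_C, Polynomial.eval_multiset_prod,
        Multiset.map_map]
      congr 1
      have hpr : p.roots = (l : Multiset ℂ) := (Multiset.coe_toList p.roots).symm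
      rw [hpr, Multiset.map_coe, Multiset.prod_coe]
      have hmap : l.map (Polynomial.eval w ∘ fun a => Polynomial.X - Polynomial.C a)
          = l.map (fun a => w - a) := by
        simp [Function.comp]
      rw [hmap]
      conv_lhs => rw [← List.ofFn_get l]
      rw [List.map_ofFn, List.prod_ofFn]
      exact (Fintype.prod_equiv (finCongr hlen.symm) _ _ (fun i => rfl)).symm
    have hC : p.leadingCoeff * ∏ i, (-(r i)) = 1 := by
      have := hkey 0
      rw [h0] at this
      simp only [zero_sub] at this
      exact this.symm
    have hprodne : (∏ i, (-(r i))) ≠ 0 := by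
      intro h; rw [h, mul_zero] at hC; exact one_ne_zero hC.symm
    have hCeq : p.leadingCoeff = (∏ i, (-(r i)))⁻¹ := by
      field_simp
      linear_combination hC
    rw [hkey z, hCeq, ← Finset.prod_inv_distrib, ← Finset.prod_mul_distrib]
    apply Finset.prod_congr rfl
    intro i _
    rw [hvdef]
    rw [inv_neg, neg_mul, mul_sub, inv_mul_cancel₀ (hrne i)]
    ring
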